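/- If X is an L-embedded Banach space, then for every bounded sequence (x_k) in X, 2·d(clust_{X**}(x_k), X) ≤ δ̃(x_k), where δ̃(x_k) is the infimum of δ_X over subsequences and d(A,X) = inf_{a∈A} dist(a,X). -/

import Mathlib

open Filter Topology NormedSpace

/-- The set of weak* cluster points in the bidual of a sequence `(x k)` in `X`. -/
def weakStarClusterPoints {X : Type*} [NormedAddCommGroup X] [NormedSpace ℝ X]
    (x : ℕ → X) : Set (StrongDual ℝ (StrongDual ℝ X)) :=
  {y | MapClusterPt (StrongDual.toWeakDual y) atTop
        fun k => StrongDual.toWeakDual (inclusionInDoubleDual ℝ X (x k))}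

/-- `δ_X (x k)`: the (norm) diameter of the set of weak* cluster points of `(x k)` in `X**`. -/
noncomputable def deltaSeq {X : Type*} [NormedAddCommGroup X] [NormedSpace ℝ X]
    (x : ℕ → X) : ℝ :=
  Metric.diam (weakStarClusterPoints x)

/-- `δ̃ (x k)`: the infimum of `δ_X` over all subsequences of `(x k)`. -/
noncomputable def deltaTilde {X : Type*} [NormedAddCommGroup X] [NormedSpace ℝ X]
    (x : ℕ → X) : ℝ :=
  sInf {d : ℝ | ∃ φ : ℕ → ℕ, StrictMono φ ∧ d = deltaSeq (x ∘ φ)}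

/-- `d(A, X)`: the distance from `A ⊆ X**` to (the canonical image of) `X`, i.e.
`inf_{a ∈ A} dist (a, X)`. -/
noncomputable def dLow {X : Type*} [NormedAddCommGroup X] [NormedSpace ℝ X]
    (A : Set (StrongDual ℝ (StrongDual ℝ X))) : ℝ :=
  sInf ((fun y => Metric.infDist y (Set.range fun v : X => inclusionInDoubleDual ℝ X v)) '' A)

/-- `X` is `L`-embedded: there is a linear projection of `X**` onto the canonical copy of `X`
satisfying `‖y‖ = ‖Py‖ + ‖y - Py‖` for all `y ∈ X**`. -/
def IsLEmbedded (X : Type*) [NormedAddCommGroup X] [NormedSpace ℝ X] : Prop :=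
  ∃ P : StrongDual ℝ (StrongDual ℝ X) →ₗ[ℝ] StrongDual ℝ (StrongDual ℝ X),
    (∀ y, P (P y) = P y) ∧
    Set.range P = Set.range (fun v : X => inclusionInDoubleDual ℝ X v) ∧
    ∀ y, ‖y‖ = ‖P y‖ + ‖y - P y‖


open Metric

section A
variable {Y : Type*} [NormedAddCommGroup Y] [NormedSpace ℝ Y]

lemma Jnorm (v : Y) : ‖inclusionInDoubleDual ℝ Y v‖ = ‖v‖ :=
  (inclusionInDoubleDualLi ℝ).norm_map v

lemma exists_ulim (g : ℕ → StrongDual ℝ Y) (M : ℝ) (hg : ∀ n, ‖g n‖ ≤ M) (U : Ultrafilter ℕ) :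
    ∃ L : StrongDual ℝ Y, ‖L‖ ≤ M ∧ ∀ v : Y, Tendsto (fun n => g n v) ↑U (𝓝 (L v)) := by
  have hK : IsCompact (WeakDual.toStrongDual ⁻¹' Metric.closedBall (0 : StrongDual ℝ Y) M) :=
    WeakDual.isCompact_closedBall (0 : StrongDual ℝ Y) M
  have hmem : ∀ n, (StrongDual.toWeakDual (g n) : WeakDual ℝ Y)
      ∈ (WeakDual.toStrongDual ⁻¹' Metric.closedBall (0 : StrongDual ℝ Y) M) := by
    intro n
    simp only [Set.mem_preimage, mem_closedBall_zero_iff]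
    exact hg n
  obtain ⟨a, haK, ha⟩ := hK.ultrafilter_le_nhds
    (U.map fun n => StrongDual.toWeakDual (g n))
    (by
      rw [Ultrafilter.coe_map, le_principal_iff]
      exact Filter.mem_map.2 (Filter.univ_mem' hmem))
  refine ⟨WeakDual.toStrongDual a, ?_, ?_⟩
  · simpa [mem_closedBall_zero_iff] using haK
  · intro v
    have hta : Tendsto (fun n => StrongDual.toWeakDual (g n)) ↑U (𝓝 a) := by
      rwa [Ultrafilter.coe_map] at ha
    exact ((WeakDual.eval_continuous v).tendsto a).comp hta

lemma ulim_norm_le (g : ℕ → StrongDual ℝ Y) (L : StrongDual ℝ Y) (U : Ultrafilter ℕ)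
    (h : ∀ v : Y, Tendsto (fun n => g n v) ↑U (𝓝 (L v))) (c : ℝ)
    (hc : {n | ‖g n‖ ≤ c} ∈ U) : ‖L‖ ≤ c := by
  obtain ⟨n₀, hn₀⟩ := U.nonempty_of_mem hc
  have hc0 : 0 ≤ c := le_trans (norm_nonneg _) hn₀
  refine L.opNorm_le_bound hc0 fun v => ?_
  have ht : Tendsto (fun n => ‖g n v‖) ↑U (𝓝 ‖L v‖) := (continuous_norm.tendsto _).comp (h v)
  refine le_of_tendsto ht (Filter.mem_of_superset hc fun n hn => ?_)
  calc ‖g n v‖ ≤ ‖g n‖ * ‖v‖ := (g n).le_opNorm v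
    _ ≤ c * ‖v‖ := mul_le_mul_of_nonneg_right hn (norm_nonneg v)

end A

section B
variable {X : Type*} [NormedAddCommGroup X] [NormedSpace ℝ X]

lemma mem_wscp (x : ℕ → X) (V : Filter ℕ) [V.NeBot] (hV : V ≤ atTop)
    (z : StrongDual ℝ (StrongDual ℝ X))
    (h : ∀ f : StrongDual ℝ X, Tendsto (fun k => inclusionInDoubleDual ℝ X (x k) f) V (𝓝 (z f))) :
    z ∈ weakStarClusterPoints x := by
  have ht : Tendsto (fun k => StrongDual.toWeakDual (inclusionInDoubleDual ℝ X (x k))) V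
      (𝓝 (StrongDual.toWeakDual z)) := by
    rw [tendsto_iff_forall_eval_tendsto_topDualPairing]
    exact h
  obtain ⟨U, hUV⟩ := Ultrafilter.exists_le V
  exact mapClusterPt_iff_ultrafilter.2 ⟨U, hUV.trans hV, ht.mono_left hUV⟩

lemma eval_tendsto_of_mem_wscp {x : ℕ → X} {t : StrongDual ℝ (StrongDual ℝ X)}
    (ht : t ∈ weakStarClusterPoints x) :
    ∃ U : Ultrafilter ℕ, ↑U ≤ (atTop : Filter ℕ) ∧
      ∀ f : StrongDual ℝ X, Tendsto (fun k => inclusionInDoubleDual ℝ X (x k) f) ↑U (𝓝 (t f)) := by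
  obtain ⟨U, hUle, hUt⟩ := mapClusterPt_iff_ultrafilter.1 ht
  refine ⟨U, hUle, fun f => ?_⟩
  exact ((WeakDual.eval_continuous f).tendsto _).comp hUt

lemma norm_le_of_mem_wscp {x : ℕ → X} {M : ℝ} (hM : ∀ k, ‖x k‖ ≤ M) {t : StrongDual ℝ (StrongDual ℝ X)}
    (ht : t ∈ weakStarClusterPoints x) : ‖t‖ ≤ M := by
  obtain ⟨U, _, h⟩ := eval_tendsto_of_mem_wscp ht
  refine ulim_norm_le _ _ U h M (Filter.univ_mem' fun k => ?_)
  calc ‖inclusionInDoubleDual ℝ X (x k)‖ = ‖x k‖ := Jnorm _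
    _ ≤ M := hM k

lemma wscp_comp_subset (x : ℕ → X) {φ : ℕ → ℕ} (hφ : StrictMono φ) :
    weakStarClusterPoints (x ∘ φ) ⊆ weakStarClusterPoints x := by
  intro t ht
  obtain ⟨U, hUle, hUt⟩ := mapClusterPt_iff_ultrafilter.1 ht
  refine mapClusterPt_iff_ultrafilter.2 ⟨U.map φ, ?_, ?_⟩
  · rw [Ultrafilter.coe_map]
    exact le_trans (Filter.map_mono hUle) hφ.tendsto_atTop
  · rw [Ultrafilter.coe_map, Filter.tendsto_map'_iff]
    exact hUt

end B

section C

noncomputable def lchain (pk : List ℕ → ℕ) : ℕ → List ℕ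
  | 0 => []
  | n + 1 => lchain pk n ++ [pk (lchain pk n)]

lemma lchain_length (pk : List ℕ → ℕ) (n : ℕ) : (lchain pk n).length = n := by
  induction n with
  | zero => rfl
  | succ n ih => simp [lchain, ih]

lemma lchain_getD (pk : List ℕ → ℕ) {n i : ℕ} (h : i < n) :
    (lchain pk n).getD i 0 = pk (lchain pk i) := by
  induction n with
  | zero => omega
  | succ n ih =>
    rcases lt_or_eq_of_le (Nat.lt_succ_iff.1 h) with h' | h'
    · rw [lchain, List.getD_append _ _ _ _ (by rw [lchain_length]; exact h')]
      exact ih h'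
    · subst h'
      rw [lchain, List.getD_append_right _ _ _ _ (by rw [lchain_length])]
      simp [lchain_length]

lemma geom_sum_le (ε : ℝ) (hε : 0 ≤ ε) (n : ℕ) :
    ∑ j ∈ Finset.range n, ε * (2⁻¹ : ℝ) ^ (j + 1) ≤ ε := by
  have h : ∑ j ∈ Finset.range n, (2⁻¹ : ℝ) ^ (j + 1) = 1 - (2⁻¹ : ℝ) ^ n := by
    induction n with
    | zero => simp
    | succ n ih => rw [Finset.sum_range_succ, ih]; ring
  rw [← Finset.mul_sum, h]
  have h2 : (0:ℝ) ≤ (2⁻¹:ℝ) ^ n := by positivity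
  nlinarith [mul_nonneg hε h2]

end C

section D
variable {X : Type*} [NormedAddCommGroup X] [NormedSpace ℝ X]

lemma exists_sep_functional {r : ℝ} (hr : 0 < r) (S : Set X)
    (hS : ∀ z ∈ convexHull ℝ S, r ≤ ‖z‖) :
    ∃ f : StrongDual ℝ X, ‖f‖ ≤ 1 ∧ ∀ z ∈ S, r ≤ f z := by
  have hdisj : Disjoint (Metric.ball (0 : X) r) (convexHull ℝ S) := by
    rw [Set.disjoint_left]
    intro z hz hz'
    rw [mem_ball_zero_iff] at hz
    exact absurd (hS z hz') (by linarith)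
  obtain ⟨f, u₀, hfb, hfC⟩ := geometric_hahn_banach_open (convex_ball 0 r) isOpen_ball
    (convex_convexHull ℝ S) hdisj
  have hu₀ : 0 < u₀ := by
    have := hfb 0 (by simp [hr])
    simpa using this
  have hpt : ∀ xv : X, |f xv| * r ≤ u₀ * ‖xv‖ := by
    intro xv
    by_cases hf0 : f xv = 0
    · rw [hf0]; simp; positivity
    have hx0 : xv ≠ 0 := by rintro rfl; simp at hf0
    have hxn : 0 < ‖xv‖ := norm_pos_iff.2 hx0
    have claim : ∀ c : ℝ, 0 ≤ c → c < r → c * |f xv| < u₀ * ‖xv‖ := by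
      intro c hc0 hcr
      have hzb : ∀ (σ : ℝ), |σ| = 1 → ((σ * c / ‖xv‖) • xv) ∈ Metric.ball (0 : X) r := by
        intro σ hσ
        rw [mem_ball_zero_iff, norm_smul]
        rw [Real.norm_eq_abs, abs_div, abs_mul, hσ, one_mul, abs_of_nonneg hc0, abs_of_pos hxn]
        rw [div_mul_cancel₀ _ (ne_of_gt hxn)]
        exact hcr
      have h1' : c / ‖xv‖ * f xv < u₀ := by
        have h := hfb _ (hzb 1 (by norm_num))
        rw [map_smul, smul_eq_mul] at h
        calc c / ‖xv‖ * f xv = 1 * c / ‖xv‖ * f xv := by ring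
          _ < u₀ := h
      have h2' : -(c / ‖xv‖ * f xv) < u₀ := by
        have h := hfb _ (hzb (-1) (by norm_num))
        rw [map_smul, smul_eq_mul] at h
        calc -(c / ‖xv‖ * f xv) = -1 * c / ‖xv‖ * f xv := by ring
          _ < u₀ := h
      have habs : (c / ‖xv‖) * |f xv| < u₀ := by
        rcases abs_cases (f xv) with ⟨he, _⟩ | ⟨he, _⟩ <;> rw [he]
        · exact h1'
        · rw [mul_neg]; exact h2'
      calc c * |f xv| = ((c / ‖xv‖) * |f xv|) * ‖xv‖ := by field_simp
        _ < u₀ * ‖xv‖ := mul_lt_mul_of_pos_right habs hxn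
    by_contra hcon
    push_neg at hcon
    have hfpos : 0 < |f xv| := abs_pos.2 hf0
    set c₀ := u₀ * ‖xv‖ / |f xv| with hc₀
    have hc₀r : c₀ < r := by
      rw [hc₀, div_lt_iff₀ hfpos]
      calc u₀ * ‖xv‖ < |f xv| * r := hcon
        _ = r * |f xv| := by ring
    have hc₀0 : 0 ≤ c₀ := by positivity
    have hcl := claim ((c₀ + r) / 2) (by linarith) (by linarith)
    have heq : c₀ * |f xv| = u₀ * ‖xv‖ := by
      rw [hc₀]; field_simp
    nlinarith [hcl, heq, hc₀r, hfpos]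
  have hfn : ‖f‖ ≤ u₀ / r := by
    refine f.opNorm_le_bound (by positivity) fun xv => ?_
    rw [Real.norm_eq_abs, div_mul_eq_mul_div, le_div_iff₀ hr]
    exact hpt xv
  have hru : (0:ℝ) < r / u₀ := by positivity
  refine ⟨(r / u₀) • f, ?_, fun z hz => ?_⟩
  · rw [norm_smul, Real.norm_eq_abs, abs_of_pos hru]
    have h2 : r / u₀ * (u₀ / r) = 1 := by field_simp
    nlinarith [mul_le_mul_of_nonneg_left hfn (le_of_lt hru)]
  · have hz' := hfC z (subset_convexHull ℝ S hz)
    rw [ContinuousLinearMap.smul_apply, smul_eq_mul]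
    have h2 : r / u₀ * u₀ = r := by field_simp
    nlinarith [mul_le_mul_of_nonneg_left hz' (le_of_lt hru)]

end D

section E
variable {Y : Type*} [NormedAddCommGroup Y] [NormedSpace ℝ Y]

lemma comb_lip {M₀ : ℝ} {m : ℕ} (v : Fin m → StrongDual ℝ Y) (hv : ∀ i, ‖v i‖ ≤ M₀)
    (w : StrongDual ℝ Y) (hw : ‖w‖ ≤ M₀) (p q : (Fin m → ℝ) × ℝ) :
    ‖(∑ i, p.1 i • v i) + p.2 • w‖
      ≤ ‖(∑ i, q.1 i • v i) + q.2 • w‖ + M₀ * ((m : ℝ) + 1) * dist p q := by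
  have hM₀ : 0 ≤ M₀ := (norm_nonneg (w)).trans hw
  have hsub : ((∑ i, p.1 i • v i) + p.2 • w) - ((∑ i, q.1 i • v i) + q.2 • w)
      = (∑ i, (p.1 i - q.1 i) • v i) + (p.2 - q.2) • w := by
    simp only [sub_smul (R := ℝ) (M := StrongDual ℝ Y)]
    rw [Finset.sum_sub_distrib]
    abel
  have hbd : ‖(∑ i, (p.1 i - q.1 i) • v i) + (p.2 - q.2) • w‖
      ≤ M₀ * ((m : ℝ) + 1) * dist p q := by
    have h1 : ∀ i : Fin m, ‖(p.1 i - q.1 i) • v i‖ ≤ M₀ * dist p q := by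
      intro i
      rw [norm_smul, Real.norm_eq_abs]
      have ha : |p.1 i - q.1 i| ≤ dist p q := by
        rw [← Real.dist_eq]
        exact (dist_le_pi_dist p.1 q.1 i).trans (by rw [Prod.dist_eq]; exact le_max_left _ _)
      calc |p.1 i - q.1 i| * ‖v i‖ ≤ dist p q * M₀ :=
            mul_le_mul ha (hv i) (norm_nonneg _) dist_nonneg
        _ = M₀ * dist p q := by ring
    have h2 : ‖(p.2 - q.2) • w‖ ≤ M₀ * dist p q := by
      rw [norm_smul, Real.norm_eq_abs]
      have ha : |p.2 - q.2| ≤ dist p q := by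
        rw [← Real.dist_eq]
        rw [Prod.dist_eq]
        exact le_max_right _ _
      calc |p.2 - q.2| * ‖w‖ ≤ dist p q * M₀ :=
            mul_le_mul ha hw (norm_nonneg _) dist_nonneg
        _ = M₀ * dist p q := by ring
    calc ‖(∑ i, (p.1 i - q.1 i) • v i) + (p.2 - q.2) • w‖
        ≤ ‖∑ i, (p.1 i - q.1 i) • v i‖ + ‖(p.2 - q.2) • w‖ := norm_add_le _ _
      _ ≤ (∑ _i : Fin m, M₀ * dist p q) + M₀ * dist p q :=
          add_le_add ((norm_sum_le _ _).trans (Finset.sum_le_sum fun i _ => h1 i)) h2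
      _ = M₀ * ((m : ℝ) + 1) * dist p q := by
          rw [Finset.sum_const, Finset.card_univ, Fintype.card_fin]
          ring
  have := norm_sub_norm_le ((∑ i, p.1 i • v i) + p.2 • w) ((∑ i, q.1 i • v i) + q.2 • w)
  rw [hsub] at this
  linarith

lemma comb_smul {m : ℕ} (v : Fin m → StrongDual ℝ Y) (w : StrongDual ℝ Y) (α : Fin m → ℝ) (tc c : ℝ)
    (hc : c ≠ 0) :
    (∑ i, α i • v i) + tc • w = c • ((∑ i, (α i / c) • v i) + (tc / c) • w) := by
  rw [smul_add, Finset.smul_sum]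
  congr 1
  · refine Finset.sum_congr rfl fun i _ => ?_
    rw [smul_smul]
    congr 1
    field_simp
  · rw [smul_smul]
    congr 1
    field_simp

set_option maxHeartbeats 1000000 in
lemma net_mem (U : Ultrafilter ℕ) (g : ℕ → StrongDual ℝ Y) (u : StrongDual ℝ Y) (M₀ : ℝ)
    (hg : ∀ k, ‖g k‖ ≤ M₀)
    (hlim : ∀ f : Y, Tendsto (fun k => g k f) ↑U (𝓝 (u f)))
    {m : ℕ} (v : Fin m → StrongDual ℝ Y) (hv : ∀ i, ‖v i‖ ≤ M₀)
    {δ : ℝ} (hδ : 0 < δ) :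
    {k | ∀ (α : Fin m → ℝ) (t : ℝ),
      ‖(∑ i, α i • v i) + t • u‖ - δ * ((∑ i, |α i|) + |t|)
        ≤ ‖(∑ i, α i • v i) + t • g k‖} ∈ U := by
  have hu : ‖u‖ ≤ M₀ := ulim_norm_le g u U hlim M₀ (Filter.univ_mem' hg)
  have hM₀ : 0 ≤ M₀ := (norm_nonneg u).trans hu
  set L := M₀ * ((m : ℝ) + 1) with hLdef
  have hL : 0 ≤ L := by positivity
  set η := δ / (4 * (L + 1)) with hηdef
  have hη : 0 < η := by positivity
  have hLη : L * η ≤ δ / 4 := by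
    have hc : η * (4 * (L + 1)) = δ := by
      rw [hηdef]; field_simp
    nlinarith
  -- the single-point sets
  have hS : ∀ p : (Fin m → ℝ) × ℝ,
      {k | ‖(∑ i, p.1 i • v i) + p.2 • u‖ - δ / 2 < ‖(∑ i, p.1 i • v i) + p.2 • g k‖} ∈ U := by
    intro p
    by_contra hns
    have hcompl := Ultrafilter.compl_mem_iff_notMem.2 hns
    have hptend : ∀ f : Y, Tendsto (fun k => ((∑ i, p.1 i • v i) + p.2 • g k) f) ↑U
        (𝓝 (((∑ i, p.1 i • v i) + p.2 • u) f)) := by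
      intro f
      simp only [ContinuousLinearMap.add_apply, ContinuousLinearMap.coe_smul',
        Pi.smul_apply, smul_eq_mul]
      exact tendsto_const_nhds.add ((hlim f).const_mul p.2)
    have hle := ulim_norm_le (fun k => (∑ i, p.1 i • v i) + p.2 • g k)
      ((∑ i, p.1 i • v i) + p.2 • u) U hptend
      (‖(∑ i, p.1 i • v i) + p.2 • u‖ - δ / 2)
      (by
        refine Filter.mem_of_superset hcompl fun k hk => ?_
        simpa [not_lt] using hk)
    linarith
  -- compact net
  have hcomp : IsCompact (Metric.closedBall (0 : (Fin m → ℝ) × ℝ) 1) :=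
    isCompact_closedBall _ _
  obtain ⟨net, hnetfin, hcover⟩ := totallyBounded_iff.1 hcomp.totallyBounded η hη
  have hT : (⋂ p ∈ net, {k | ‖(∑ i, p.1 i • v i) + p.2 • u‖ - δ / 2
      < ‖(∑ i, p.1 i • v i) + p.2 • g k‖}) ∈ U :=
    (Filter.biInter_mem hnetfin).2 fun p _ => hS p
  refine Filter.mem_of_superset hT fun k hk => ?_
  intro α tc
  have habs : (0:ℝ) ≤ ∑ i, |α i| := Finset.sum_nonneg fun i _ => abs_nonneg _
  have h0 : 0 ≤ (∑ i, |α i|) + |tc| := by positivity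
  rcases eq_or_lt_of_le h0 with he | hpos
  · have hai : ∀ i : Fin m, α i = 0 := by
      intro i
      have h1 : |α i| ≤ ∑ j, |α j| :=
        Finset.single_le_sum (f := fun j => |α j|) (fun j _ => abs_nonneg _) (Finset.mem_univ i)
      have := abs_nonneg (α i)
      have := abs_nonneg tc
      have : |α i| = 0 := by linarith
      exact abs_eq_zero.1 this
    have htc : tc = 0 := by
      have := abs_nonneg tc
      have : |tc| = 0 := by linarith
      exact abs_eq_zero.1 this
    simp [hai, htc]
  · obtain ⟨q, hqnet, hq⟩ := Set.mem_iUnion₂.1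
      (hcover (show ((fun i => α i / ((∑ i, |α i|) + |tc|), tc / ((∑ i, |α i|) + |tc|))
          : (Fin m → ℝ) × ℝ) ∈ Metric.closedBall (0 : (Fin m → ℝ) × ℝ) 1 by
        rw [mem_closedBall_zero_iff, Prod.norm_def]
        apply max_le
        · rw [pi_norm_le_iff_of_nonneg zero_le_one]
          intro i
          rw [Real.norm_eq_abs, abs_div, abs_of_pos hpos, div_le_one hpos]
          have h1 : |α i| ≤ ∑ j, |α j| :=
            Finset.single_le_sum (f := fun j => |α j|) (fun j _ => abs_nonneg _)
              (Finset.mem_univ i)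
          have := abs_nonneg tc
          linarith
        · rw [Real.norm_eq_abs, abs_div, abs_of_pos hpos, div_le_one hpos]
          linarith))
    have hqS : ‖(∑ i, q.1 i • v i) + q.2 • u‖ - δ / 2 < ‖(∑ i, q.1 i • v i) + q.2 • g k‖ :=
      Set.mem_iInter₂.1 hk q hqnet
    have hdq : dist ((fun i => α i / ((∑ i, |α i|) + |tc|), tc / ((∑ i, |α i|) + |tc|))
        : (Fin m → ℝ) × ℝ) q < η := Metric.mem_ball.1 hq
    have hdq' : dist q ((fun i => α i / ((∑ i, |α i|) + |tc|), tc / ((∑ i, |α i|) + |tc|))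
        : (Fin m → ℝ) × ℝ) < η := by rwa [dist_comm]
    have c1 := comb_lip v hv (g k) (hg k) q
      ((fun i => α i / ((∑ i, |α i|) + |tc|), tc / ((∑ i, |α i|) + |tc|)))
    have c2 := comb_lip v hv u hu
      ((fun i => α i / ((∑ i, |α i|) + |tc|), tc / ((∑ i, |α i|) + |tc|))) q
    have hchain : ‖(∑ i, (α i / ((∑ i, |α i|) + |tc|)) • v i)
          + (tc / ((∑ i, |α i|) + |tc|)) • u‖ - δ
        ≤ ‖(∑ i, (α i / ((∑ i, |α i|) + |tc|)) • v i)
          + (tc / ((∑ i, |α i|) + |tc|)) • g k‖ := by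
      have e1 : L * dist q ((fun i => α i / ((∑ i, |α i|) + |tc|),
          tc / ((∑ i, |α i|) + |tc|)) : (Fin m → ℝ) × ℝ) ≤ δ / 4 := by
        have := mul_le_mul_of_nonneg_left (le_of_lt hdq') hL
        linarith [hLη, this]
      have e2 : L * dist ((fun i => α i / ((∑ i, |α i|) + |tc|),
          tc / ((∑ i, |α i|) + |tc|)) : (Fin m → ℝ) × ℝ) q ≤ δ / 4 := by
        have := mul_le_mul_of_nonneg_left (le_of_lt hdq) hL
        linarith [hLη, this]
      rw [← hLdef] at c1 c2
      linarith
    have hnu : ‖(∑ i, α i • v i) + tc • u‖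
        = ((∑ i, |α i|) + |tc|) * ‖(∑ i, (α i / ((∑ i, |α i|) + |tc|)) • v i)
            + (tc / ((∑ i, |α i|) + |tc|)) • u‖ := by
      rw [comb_smul v u α tc _ (ne_of_gt hpos), norm_smul, Real.norm_eq_abs, abs_of_pos hpos]
    have hng : ‖(∑ i, α i • v i) + tc • g k‖
        = ((∑ i, |α i|) + |tc|) * ‖(∑ i, (α i / ((∑ i, |α i|) + |tc|)) • v i)
            + (tc / ((∑ i, |α i|) + |tc|)) • g k‖ := by
      rw [comb_smul v (g k) α tc _ (ne_of_gt hpos), norm_smul, Real.norm_eq_abs,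
        abs_of_pos hpos]
    have hmul := mul_le_mul_of_nonneg_left hchain (le_of_lt hpos)
    nlinarith [hnu, hng, hmul]
end E

section F

open Classical in
noncomputable def pickFn (Good : ℕ → (ℕ → ℕ) → Set ℕ) : List ℕ → ℕ := fun l =>
  if h : (Good l.length (fun i => l.getD i 0)).Nonempty then h.choose else 0

noncomputable def kseq (Good : ℕ → (ℕ → ℕ) → Set ℕ) : ℕ → ℕ := fun n =>
  pickFn Good (lchain (pickFn Good) n)

lemma kseq_mem (Good : ℕ → (ℕ → ℕ) → Set ℕ) (hne : ∀ j κ, (Good j κ).Nonempty)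
    (hcongr : ∀ j (κ κ' : ℕ → ℕ), (∀ i < j, κ i = κ' i) → Good j κ = Good j κ') (n : ℕ) :
    kseq Good n ∈ Good n (kseq Good) := by
  have hlen := lchain_length (pickFn Good) n
  have hset : Good (lchain (pickFn Good) n).length
      (fun i => (lchain (pickFn Good) n).getD i 0) = Good n (kseq Good) := by
    rw [hlen]
    refine hcongr n _ _ fun i hi => ?_
    rw [lchain_getD _ hi]
    rfl
  show pickFn Good (lchain (pickFn Good) n) ∈ Good n (kseq Good)
  rw [← hset]
  unfold pickFn
  rw [dif_pos (hne _ _)]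
  exact (hne _ _).choose_spec

variable {X : Type*} [NormedAddCommGroup X] [NormedSpace ℝ X]

set_option maxHeartbeats 1600000 in
lemma peel_lemma
    (P : StrongDual ℝ (StrongDual ℝ X) →ₗ[ℝ] StrongDual ℝ (StrongDual ℝ X))
    (hNorm : ∀ y, ‖y‖ = ‖P y‖ + ‖y - P y‖)
    (hfix : ∀ vv : X, P (inclusionInDoubleDual ℝ X vv) = inclusionInDoubleDual ℝ X vv)
    (u : StrongDual ℝ (StrongDual ℝ X)) (b : X) (hbP : inclusionInDoubleDual ℝ X b = P u)
    (w : ℕ → X) (δ : ℕ → ℝ) (hδ0 : ∀ j, 0 ≤ δ j)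
    (hC : ∀ n (α : Fin (n+1) → ℝ) (tc : ℝ),
      ‖(∑ i, α i • (if (i:ℕ) < n then inclusionInDoubleDual ℝ X (w i)
            else inclusionInDoubleDual ℝ X b)) + tc • u‖
          - δ n * ((∑ i, |α i|) + |tc|)
        ≤ ‖(∑ i, α i • (if (i:ℕ) < n then inclusionInDoubleDual ℝ X (w i)
            else inclusionInDoubleDual ℝ X b)) + tc • inclusionInDoubleDual ℝ X (w n)‖) :
    ∀ n (a : ℕ → ℝ) (c : ℝ), (∑ i ∈ Finset.range n, |a i|) + |c| ≤ 1 →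
      ‖u - P u‖ * (∑ i ∈ Finset.range n, |a i|) - (∑ j ∈ Finset.range n, δ j)
        ≤ ‖(∑ i ∈ Finset.range n, a i • inclusionInDoubleDual ℝ X (w i))
            + c • inclusionInDoubleDual ℝ X b‖ := by
  intro n
  induction n with
  | zero =>
    intro a c _
    simp only [Finset.range_zero, Finset.sum_empty, mul_zero, zero_sub, zero_add]
    have := norm_nonneg (c • inclusionInDoubleDual ℝ X b)
    linarith
  | succ n ih =>
    intro a c hac
    have hsum_succ : ∑ i ∈ Finset.range (n+1), |a i|
        = (∑ i ∈ Finset.range n, |a i|) + |a n| := Finset.sum_range_succ _ _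
    have hδ_succ : ∑ j ∈ Finset.range (n+1), δ j
        = (∑ j ∈ Finset.range n, δ j) + δ n := Finset.sum_range_succ _ _
    have hid : (∑ i : Fin (n+1), (if (i:ℕ) < n then a i else c)
          • (if (i:ℕ) < n then inclusionInDoubleDual ℝ X (w i)
              else inclusionInDoubleDual ℝ X b))
        = (∑ i ∈ Finset.range n, a i • inclusionInDoubleDual ℝ X (w i))
            + c • inclusionInDoubleDual ℝ X b := by
      rw [Fin.sum_univ_castSucc]
      congr 1
      · rw [← Fin.sum_univ_eq_sum_range (fun i => a i • inclusionInDoubleDual ℝ X (w i)) n]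
        refine Finset.sum_congr rfl fun i _ => ?_
        simp [Fin.coe_castSucc, i.isLt]
      · simp [Fin.val_last]
    have habs : (∑ i : Fin (n+1), |if (i:ℕ) < n then a i else c|)
        = (∑ i ∈ Finset.range n, |a i|) + |c| := by
      rw [Fin.sum_univ_castSucc]
      congr 1
      · rw [← Fin.sum_univ_eq_sum_range (fun i => |a i|) n]
        refine Finset.sum_congr rfl fun i _ => ?_
        simp [Fin.coe_castSucc, i.isLt]
      · simp [Fin.val_last]
    have hCn := hC n (fun i => if (i:ℕ) < n then a i else c) (a n)
    rw [hid, habs] at hCn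
    -- L-identity
    have hA : P ((∑ i ∈ Finset.range n, a i • inclusionInDoubleDual ℝ X (w i))
          + c • inclusionInDoubleDual ℝ X b)
        = (∑ i ∈ Finset.range n, a i • inclusionInDoubleDual ℝ X (w i))
            + c • inclusionInDoubleDual ℝ X b := by
      rw [map_add]
      rw [map_smul, hfix b]
      rw [map_sum]
      congr 1
      refine Finset.sum_congr rfl fun i _ => ?_
      rw [map_smul, hfix]
    have hz : ‖(∑ i ∈ Finset.range n, a i • inclusionInDoubleDual ℝ X (w i))
          + c • inclusionInDoubleDual ℝ X b + a n • u‖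
        = ‖(∑ i ∈ Finset.range n, a i • inclusionInDoubleDual ℝ X (w i))
            + (c + a n) • inclusionInDoubleDual ℝ X b‖ + |a n| * ‖u - P u‖ := by
      rw [hNorm ((∑ i ∈ Finset.range n, a i • inclusionInDoubleDual ℝ X (w i))
          + c • inclusionInDoubleDual ℝ X b + a n • u)]
      have h1 : P ((∑ i ∈ Finset.range n, a i • inclusionInDoubleDual ℝ X (w i))
            + c • inclusionInDoubleDual ℝ X b + a n • u)
          = (∑ i ∈ Finset.range n, a i • inclusionInDoubleDual ℝ X (w i))
              + c • inclusionInDoubleDual ℝ X b + a n • (P u) := by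
        rw [map_add, map_smul, hA]
      have h2 : (∑ i ∈ Finset.range n, a i • inclusionInDoubleDual ℝ X (w i))
            + c • inclusionInDoubleDual ℝ X b + a n • u - ((∑ i ∈ Finset.range n,
              a i • inclusionInDoubleDual ℝ X (w i))
            + c • inclusionInDoubleDual ℝ X b + a n • (P u)) = a n • (u - P u) := by
        rw [(smul_sub (a n) u (P u) : a n • (u - P u) = a n • u - a n • P u)]
        abel
      rw [h1, h2, (@norm_smul _ _ _ _ _ NormedSpace.toNormSMulClass (a n) (u - P u) :
        ‖a n • (u - P u)‖ = ‖a n‖ * ‖u - P u‖), Real.norm_eq_abs]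
      congr 2
      rw [hbP, add_smul]
      abel
    have hIH : ‖u - P u‖ * (∑ i ∈ Finset.range n, |a i|) - (∑ j ∈ Finset.range n, δ j)
        ≤ ‖(∑ i ∈ Finset.range n, a i • inclusionInDoubleDual ℝ X (w i))
            + (c + a n) • inclusionInDoubleDual ℝ X b‖ := by
      refine ih a (c + a n) ?_
      have := abs_add_le c (a n)
      rw [hsum_succ] at hac
      linarith
    have hδbd : δ n * ((∑ i ∈ Finset.range n, |a i|) + |c| + |a n|) ≤ δ n := by
      have hb1 : (∑ i ∈ Finset.range n, |a i|) + |c| + |a n| ≤ 1 := by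
        rw [hsum_succ] at hac
        linarith
      have hb0 : 0 ≤ (∑ i ∈ Finset.range n, |a i|) + |c| + |a n| := by
        have h1 : (0:ℝ) ≤ ∑ i ∈ Finset.range n, |a i| :=
          Finset.sum_nonneg fun i _ => abs_nonneg _
        have := abs_nonneg c
        have := abs_nonneg (a n)
        linarith
      calc δ n * ((∑ i ∈ Finset.range n, |a i|) + |c| + |a n|) ≤ δ n * 1 :=
            mul_le_mul_of_nonneg_left hb1 (hδ0 n)
        _ = δ n := mul_one _
    have hgoalRHS : (∑ i ∈ Finset.range (n+1), a i • inclusionInDoubleDual ℝ X (w i))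
          + c • inclusionInDoubleDual ℝ X b
        = ((∑ i ∈ Finset.range n, a i • inclusionInDoubleDual ℝ X (w i))
            + c • inclusionInDoubleDual ℝ X b) + a n • inclusionInDoubleDual ℝ X (w n) := by
      rw [Finset.sum_range_succ]
      abel
    rw [hgoalRHS, hsum_succ, hδ_succ]
    have haneg : 0 ≤ |a n| := abs_nonneg _
    have hsneg : 0 ≤ ‖u - P u‖ := norm_nonneg (u - P u)
    nlinarith [hCn, hz, hIH, hδbd]
end F

section G
variable {X : Type*} [NormedAddCommGroup X] [NormedSpace ℝ X]

set_option maxHeartbeats 4000000 in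
lemma key_subseq
    (P : StrongDual ℝ (StrongDual ℝ X) →ₗ[ℝ] StrongDual ℝ (StrongDual ℝ X))
    (hProj : ∀ y, P (P y) = P y)
    (hRange : Set.range P = Set.range (fun v : X => inclusionInDoubleDual ℝ X v))
    (hNorm : ∀ y, ‖y‖ = ‖P y‖ + ‖y - P y‖)
    (z : ℕ → X) (M : ℝ) (hM : ∀ k, ‖z k‖ ≤ M)
    (d ε : ℝ)
    (hd : ∀ t ∈ weakStarClusterPoints z,
      d ≤ Metric.infDist t (Set.range fun v : X => inclusionInDoubleDual ℝ X v))
    (hε : 0 < ε) (hεd : ε < d) :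
    ∃ t₁ ∈ weakStarClusterPoints z, ∃ t₂ ∈ weakStarClusterPoints z,
      2 * (d - ε) ≤ dist t₁ t₂ := by
  classical
  have hfix : ∀ vv : X, P (inclusionInDoubleDual ℝ X vv) = inclusionInDoubleDual ℝ X vv := by
    intro vv
    have hmem : inclusionInDoubleDual ℝ X vv ∈ Set.range P := by
      rw [hRange]; exact ⟨vv, rfl⟩
    obtain ⟨y', hy'⟩ := hmem
    rw [← hy', hProj]
  have hgb : ∀ k, ‖inclusionInDoubleDual ℝ X (z k)‖ ≤ M := fun k => by
    rw [Jnorm]; exact hM k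
  set U := Ultrafilter.of (atTop : Filter ℕ) with hU
  have hUle : ↑U ≤ (atTop : Filter ℕ) := Ultrafilter.of_le _
  obtain ⟨u, hunorm, hulim⟩ := exists_ulim (fun k => inclusionInDoubleDual ℝ X (z k)) M hgb U
  have humem : u ∈ weakStarClusterPoints z := mem_wscp z ↑U hUle u hulim
  obtain ⟨b, hbP⟩ : ∃ b : X, inclusionInDoubleDual ℝ X b = P u := by
    have hmem : P u ∈ Set.range (fun v : X => inclusionInDoubleDual ℝ X v) := by
      rw [← hRange]; exact ⟨u, rfl⟩
    exact hmem
  have hs_d : d ≤ ‖u - P u‖ := by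
    have h1 : Metric.infDist u (Set.range fun v : X => inclusionInDoubleDual ℝ X v)
        ≤ dist u (P u) := by
      refine Metric.infDist_le_dist_of_mem ?_
      rw [← hRange]; exact ⟨u, rfl⟩
    rw [dist_eq_norm] at h1
    exact (hd u humem).trans h1
  have hJb : ‖inclusionInDoubleDual ℝ X b‖ ≤ M := by
    rw [hbP]
    have h1 := hNorm u
    have h2 := norm_nonneg (u - P u)
    linarith
  have hδpos : ∀ j : ℕ, 0 < ε * (2⁻¹ : ℝ) ^ (j + 1) := fun j => by positivity
  set Good : ℕ → (ℕ → ℕ) → Set ℕ := fun j κ =>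
    {kk | ∀ i < j, κ i < kk} ∩
    {kk | ∀ (α : Fin (j+1) → ℝ) (t : ℝ),
      ‖(∑ i, α i • (if (i:ℕ) < j then inclusionInDoubleDual ℝ X (z (κ i))
            else inclusionInDoubleDual ℝ X b)) + t • u‖
          - (ε * (2⁻¹ : ℝ) ^ (j + 1)) * ((∑ i, |α i|) + |t|)
        ≤ ‖(∑ i, α i • (if (i:ℕ) < j then inclusionInDoubleDual ℝ X (z (κ i))
            else inclusionInDoubleDual ℝ X b))
            + t • inclusionInDoubleDual ℝ X (z kk)‖} with hGoodDef
  have hGoodU : ∀ j κ, Good j κ ∈ U := by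
    intro j κ
    refine Filter.inter_mem ?_ ?_
    · refine Filter.mem_of_superset
        (Filter.le_def.1 hUle _ (Filter.Ici_mem_atTop ((Finset.range j).sup κ + 1))) ?_
      intro kk hkk i hij
      have h1 : κ i ≤ (Finset.range j).sup κ := Finset.le_sup (Finset.mem_range.2 hij)
      have h2 : (Finset.range j).sup κ + 1 ≤ kk := hkk
      omega
    · exact net_mem U (fun kk => inclusionInDoubleDual ℝ X (z kk)) u M hgb hulim
        (fun i : Fin (j+1) => if (i:ℕ) < j then inclusionInDoubleDual ℝ X (z (κ i))
          else inclusionInDoubleDual ℝ X b)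
        (fun i => by
          show ‖if (i:ℕ) < j then inclusionInDoubleDual ℝ X (z (κ i))
              else inclusionInDoubleDual ℝ X b‖ ≤ M
          by_cases h : (i:ℕ) < j
          · rw [if_pos h]; exact hgb _
          · rw [if_neg h]; exact hJb)
        (hδpos j)
  have hne : ∀ j κ, (Good j κ).Nonempty := fun j κ => U.nonempty_of_mem (hGoodU j κ)
  have hcongr : ∀ j (κ κ' : ℕ → ℕ), (∀ i < j, κ i = κ' i) → Good j κ = Good j κ' := by
    intro j κ κ' hagree
    rw [hGoodDef]
    have h1 : {kk | ∀ i < j, κ i < kk} = {kk | ∀ i < j, κ' i < kk} := by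
      ext kk
      constructor <;> intro h i hi
      · rw [← hagree i hi]; exact h i hi
      · rw [hagree i hi]; exact h i hi
    have h2 : ∀ i : Fin (j+1), (if (i:ℕ) < j then inclusionInDoubleDual ℝ X (z (κ i))
          else inclusionInDoubleDual ℝ X b)
        = (if (i:ℕ) < j then inclusionInDoubleDual ℝ X (z (κ' i))
          else inclusionInDoubleDual ℝ X b) := by
      intro i
      by_cases hij : (i:ℕ) < j
      · rw [if_pos hij, if_pos hij, hagree _ hij]
      · rw [if_neg hij, if_neg hij]
    simp only [h1, h2]
  have hkmem : ∀ n, kseq Good n ∈ Good n (kseq Good) := kseq_mem Good hne hcongr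
  have hkmono : StrictMono (kseq Good) :=
    strictMono_nat_of_lt_succ fun n => (hkmem (n+1)).1 n (Nat.lt_succ_self n)
  -- the peeled inequality
  have hpeel := peel_lemma P hNorm hfix u b hbP (fun i => z (kseq Good i))
    (fun j => ε * (2⁻¹ : ℝ) ^ (j + 1)) (fun j => (hδpos j).le)
    (fun n α tc => (hkmem n).2 α tc)
  -- lower bound on the convex hull of signed points
  have hhull : ∀ n : ℕ, ∀ zz ∈ convexHull ℝ
      ((fun i => (if Even i then (1:ℝ) else -1) • z (kseq Good i)) '' {i | i < n + 1}),
      d - ε ≤ ‖zz‖ := by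
    intro n zz hzz
    rw [convexHull_eq] at hzz
    obtain ⟨ι, tf, W, zf, hW0, hW1, hzS, hcm⟩ := hzz
    rw [Finset.centerMass_eq_of_sum_1 _ _ hW1] at hcm
    have hidx0 : ∀ j : ι, ∃ i : ℕ, j ∈ tf → (i < n + 1 ∧
        (if Even i then (1:ℝ) else -1) • z (kseq Good i) = zf j) := by
      intro j
      by_cases hj : j ∈ tf
      · obtain ⟨i, hi, he⟩ := hzS j hj
        exact ⟨i, fun _ => ⟨hi, he⟩⟩
      · exact ⟨0, fun h => absurd h hj⟩
    choose idx hidx using hidx0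
    set a : ℕ → ℝ := fun i => (∑ j ∈ tf.filter (fun j => idx j = i), W j)
      * (if Even i then (1:ℝ) else -1) with ha
    have key1 : ∑ i ∈ Finset.range (n+1), a i • inclusionInDoubleDual ℝ X (z (kseq Good i))
        = inclusionInDoubleDual ℝ X (∑ j ∈ tf, W j • zf j) := by
      have e1 : ∀ i ∈ Finset.range (n+1),
          a i • inclusionInDoubleDual ℝ X (z (kseq Good i))
          = ∑ j ∈ tf.filter (fun j => idx j = i),
              W j • ((if Even (idx j) then (1:ℝ) else -1)
                • inclusionInDoubleDual ℝ X (z (kseq Good (idx j)))) := by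
        intro i _
        simp only [ha]
        rw [mul_smul, Finset.sum_smul]
        refine Finset.sum_congr rfl fun j hj => ?_
        rw [(Finset.mem_filter.1 hj).2]
      rw [Finset.sum_congr rfl e1]
      rw [Finset.sum_fiberwise_of_maps_to (fun j hj => Finset.mem_range.2 (hidx j hj).1)
        (fun j => W j • ((if Even (idx j) then (1:ℝ) else -1)
          • inclusionInDoubleDual ℝ X (z (kseq Good (idx j)))))]
      rw [map_sum]
      refine Finset.sum_congr rfl fun j hj => ?_
      rw [map_smul]
      congr 1
      rw [← map_smul]
      congr 1
      exact (hidx j hj).2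
    have key2 : ∑ i ∈ Finset.range (n+1), |a i| = 1 := by
      have e2 : ∀ i ∈ Finset.range (n+1), |a i| = ∑ j ∈ tf.filter (fun j => idx j = i), W j := by
        intro i _
        rw [ha]
        have h1 : |if Even i then (1:ℝ) else -1| = 1 := by
          by_cases h : Even i <;> simp [h]
        rw [abs_mul, h1, mul_one]
        refine abs_of_nonneg (Finset.sum_nonneg fun j hj => hW0 j (Finset.mem_filter.1 hj).1)
      rw [Finset.sum_congr rfl e2]
      rw [Finset.sum_fiberwise_of_maps_to (fun j hj => Finset.mem_range.2 (hidx j hj).1) W]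
      exact hW1
    have hp := hpeel (n+1) a 0 (by rw [key2]; simp)
    rw [key1, zero_smul, add_zero, key2, mul_one] at hp
    rw [Jnorm, hcm] at hp
    have hgeom := geom_sum_le ε hε.le (n+1)
    linarith
  -- the separating functionals
  have hfn : ∀ n : ℕ, ∃ f : StrongDual ℝ X, ‖f‖ ≤ 1 ∧
      ∀ i ≤ n, d - ε ≤ (if Even i then (1:ℝ) else -1) * f (z (kseq Good i)) := by
    intro n
    obtain ⟨f, hf1, hf2⟩ := exists_sep_functional (show (0:ℝ) < d - ε by linarith) _ (hhull n)
    refine ⟨f, hf1, fun i hi => ?_⟩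
    have := hf2 _ ⟨i, Nat.lt_succ_of_le hi, rfl⟩
    rwa [map_smul, smul_eq_mul] at this
  choose F hF1 hF2 using hfn
  obtain ⟨flim, hflim1, hflimlim⟩ := exists_ulim F 1 hF1 U
  have hflimval : ∀ i : ℕ, d - ε ≤ (if Even i then (1:ℝ) else -1) * flim (z (kseq Good i)) := by
    intro i
    have ht : Tendsto (fun n => (if Even i then (1:ℝ) else -1) * F n (z (kseq Good i))) ↑U
        (𝓝 ((if Even i then (1:ℝ) else -1) * flim (z (kseq Good i)))) :=
      (hflimlim _).const_mul _
    refine ge_of_tendsto ht ?_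
    refine Filter.mem_of_superset (Filter.le_def.1 hUle _ (Filter.Ici_mem_atTop i))
      fun n hn => ?_
    exact hF2 n i hn
  -- two cluster points along even/odd indices
  have hEbot : (atTop ⊓ 𝓟 {i : ℕ | Even i}).NeBot := by
    rw [Filter.inf_principal_neBot_iff]
    intro s hs
    obtain ⟨N, hN⟩ := Filter.mem_atTop_sets.1 hs
    exact ⟨2 * N, hN _ (by omega), ⟨N, by omega⟩⟩
  have hObot : (atTop ⊓ 𝓟 {i : ℕ | ¬ Even i}).NeBot := by
    rw [Filter.inf_principal_neBot_iff]
    intro s hs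
    obtain ⟨N, hN⟩ := Filter.mem_atTop_sets.1 hs
    refine ⟨2 * N + 1, hN _ (by omega), ?_⟩
    rintro ⟨r, hr⟩
    omega
  set UE := Ultrafilter.of (atTop ⊓ 𝓟 {i : ℕ | Even i}) with hUE
  have hUEle : ↑UE ≤ atTop ⊓ 𝓟 {i : ℕ | Even i} := Ultrafilter.of_le _
  set UO := Ultrafilter.of (atTop ⊓ 𝓟 {i : ℕ | ¬ Even i}) with hUO
  have hUOle : ↑UO ≤ atTop ⊓ 𝓟 {i : ℕ | ¬ Even i} := Ultrafilter.of_le _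
  obtain ⟨t₁, ht₁n, ht₁lim⟩ := exists_ulim
    (fun i => inclusionInDoubleDual ℝ X (z (kseq Good i))) M (fun i => hgb _) UE
  obtain ⟨t₂, ht₂n, ht₂lim⟩ := exists_ulim
    (fun i => inclusionInDoubleDual ℝ X (z (kseq Good i))) M (fun i => hgb _) UO
  have hmap : ∀ V : Ultrafilter ℕ, ↑V ≤ (atTop : Filter ℕ) →
      Filter.map (kseq Good) ↑V ≤ (atTop : Filter ℕ) := by
    intro V hV
    calc Filter.map (kseq Good) ↑V ≤ Filter.map (kseq Good) atTop := Filter.map_mono hV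
      _ ≤ atTop := hkmono.tendsto_atTop
  have ht₁mem : t₁ ∈ weakStarClusterPoints z := by
    refine mem_wscp z (Filter.map (kseq Good) ↑UE)
      (hmap UE (hUEle.trans inf_le_left)) t₁ ?_
    intro f
    rw [Filter.tendsto_map'_iff]
    exact ht₁lim f
  have ht₂mem : t₂ ∈ weakStarClusterPoints z := by
    refine mem_wscp z (Filter.map (kseq Good) ↑UO)
      (hmap UO (hUOle.trans inf_le_left)) t₂ ?_
    intro f
    rw [Filter.tendsto_map'_iff]
    exact ht₂lim f
  have hEmem : {i : ℕ | Even i} ∈ UE :=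
    hUEle (Filter.mem_inf_of_right (Filter.mem_principal_self _))
  have hOmem : {i : ℕ | ¬ Even i} ∈ UO :=
    hUOle (Filter.mem_inf_of_right (Filter.mem_principal_self _))
  have ht₁val : d - ε ≤ t₁ flim := by
    refine ge_of_tendsto (ht₁lim flim) (Filter.mem_of_superset hEmem fun i hi => ?_)
    have hi' : Even i := hi
    have h := hflimval i
    rw [if_pos hi', one_mul] at h
    exact h
  have ht₂val : t₂ flim ≤ -(d - ε) := by
    refine le_of_tendsto (ht₂lim flim) (Filter.mem_of_superset hOmem fun i hi => ?_)
    have hi' : ¬ Even i := hi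
    have h := hflimval i
    rw [if_neg hi'] at h
    show flim (z (kseq Good i)) ≤ -(d - ε)
    linarith
  refine ⟨t₁, ht₁mem, t₂, ht₂mem, ?_⟩
  have h2 : t₁ flim - t₂ flim ≤ ‖t₁ - t₂‖ := by
    have h3 : t₁ flim - t₂ flim = (t₁ - t₂) flim := (ContinuousLinearMap.sub_apply t₁ t₂ flim).symm
    rw [h3]
    calc (t₁ - t₂) flim ≤ |(t₁ - t₂) flim| := le_abs_self _
      _ ≤ ‖t₁ - t₂‖ * ‖flim‖ := by
          rw [← Real.norm_eq_abs]
          exact (t₁ - t₂).le_opNorm flim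
      _ ≤ ‖t₁ - t₂‖ * 1 := mul_le_mul_of_nonneg_left hflim1 (norm_nonneg _)
      _ = ‖t₁ - t₂‖ := mul_one _
  rw [(dist_eq_norm t₁ t₂ : dist t₁ t₂ = ‖t₁ - t₂‖)]
  linarith

end G

/-- If `X` is an `L`-embedded Banach space, then for every bounded sequence
`(x k)` in `X`, `2 · d(clust_{X**}(x_k), X) ≤ δ̃(x_k)`. -/
theorem statement4 {X : Type*} [NormedAddCommGroup X] [NormedSpace ℝ X] [CompleteSpace X]
    (hL : IsLEmbedded X) (x : ℕ → X) (hb : ∃ M : ℝ, ∀ k, ‖x k‖ ≤ M) :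
    2 * dLow (weakStarClusterPoints x) ≤ deltaTilde x := by
  obtain ⟨P, hProj, hRange, hNorm⟩ := hL
  obtain ⟨M, hM⟩ := hb
  have hne : {dd : ℝ | ∃ φ : ℕ → ℕ, StrictMono φ ∧ dd = deltaSeq (x ∘ φ)}.Nonempty :=
    ⟨deltaSeq x, id, strictMono_id, by rw [Function.comp_id]⟩
  rw [deltaTilde]
  refine le_csInf hne ?_
  rintro D ⟨φ, hφ, rfl⟩
  have hDnn : 0 ≤ deltaSeq (x ∘ φ) := by
    show (0:ℝ) ≤ Metric.diam (weakStarClusterPoints (x ∘ φ))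
    exact Metric.diam_nonneg
  set d := dLow (weakStarClusterPoints x) with hdDef
  rcases le_or_gt d 0 with hd0 | hd0
  · linarith
  · have hdle : ∀ t ∈ weakStarClusterPoints (x ∘ φ),
        d ≤ Metric.infDist t (Set.range fun v : X => inclusionInDoubleDual ℝ X v) := by
      intro t ht
      have ht' : t ∈ weakStarClusterPoints x := wscp_comp_subset x hφ ht
      rw [hdDef, dLow]
      refine csInf_le ?_ ?_
      · refine ⟨0, ?_⟩
        rintro r ⟨y, _, rfl⟩
        exact Metric.infDist_nonneg
      · exact ⟨t, ht', rfl⟩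
    have hbdd : Bornology.IsBounded (weakStarClusterPoints (x ∘ φ)) := by
      have hsub : weakStarClusterPoints (x ∘ φ) ⊆ Metric.closedBall 0 M := by
        intro t ht
        rw [Metric.mem_closedBall, (dist_zero_right t : dist t 0 = ‖t‖)]
        exact norm_le_of_mem_wscp (fun k => hM (φ k)) ht
      exact Metric.isBounded_closedBall.subset hsub
    have hkey : ∀ ε : ℝ, 0 < ε → ε < d → 2 * (d - ε) ≤ deltaSeq (x ∘ φ) := by
      intro ε hε hεd
      obtain ⟨t₁, h1, t₂, h2, hdist⟩ := key_subseq P hProj hRange hNorm (x ∘ φ) M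
        (fun k => hM (φ k)) d ε hdle hε hεd
      show 2 * (d - ε) ≤ Metric.diam (weakStarClusterPoints (x ∘ φ))
      calc 2 * (d - ε) ≤ dist t₁ t₂ := hdist
        _ ≤ Metric.diam (weakStarClusterPoints (x ∘ φ)) :=
            Metric.dist_le_diam_of_mem hbdd h1 h2
    by_contra hcon
    push_neg at hcon
    set ε := min ((2 * d - deltaSeq (x ∘ φ)) / 4) (d / 2) with hεdef
    have hε1 : 0 < ε := lt_min (by linarith) (by linarith)
    have hε2 : ε < d := lt_of_le_of_lt (min_le_right _ _) (by linarith)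
    have hk := hkey ε hε1 hε2
    have h3 : ε ≤ (2 * d - deltaSeq (x ∘ φ)) / 4 := min_le_left _ _
    linarith
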